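/- Let C = v₁, e₁, v₂, e₂, …, v_ℓ, e_ℓ, v₁ be a β-cycle of length ℓ ≥ 3 in a hypergraph G. Define U₁ := (e_ℓ ∩ e₁) \ ⋃_{j=2}^{ℓ−1} e_j and, for i = 2,…,ℓ, U_i := (e_{i−1} ∩ e_i) \ ⋃_{j ∈ [ℓ]\{i−1,i}} e_j. Then for every nest-set s of G, the set s ∩ (⋃_{j=1}^ℓ U_j) is either empty or s contains at least ℓ − 1 of the sets U_j, j ∈ [ℓ]. -/

import Mathlib

open Finset

/-- `N` is a nest-set of the hypergraph with edge set `E`: the family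
`{e \ N : e ∈ E, e ∩ N ≠ ∅}` is totally ordered by inclusion. -/
def IsNestSet {V : Type*} [DecidableEq V] (E : Finset (Finset V)) (N : Finset V) : Prop :=
  ∀ e₁ ∈ E, ∀ e₂ ∈ E, (e₁ ∩ N).Nonempty → (e₂ ∩ N).Nonempty →
    e₁ \ N ⊆ e₂ \ N ∨ e₂ \ N ⊆ e₁ \ N

/-- `v` is a nest point: the edges containing `v` are totally ordered by inclusion. -/
def IsNestPoint {V : Type*} (E : Finset (Finset V)) (v : V) : Prop :=
  ∀ e₁ ∈ E, ∀ e₂ ∈ E, v ∈ e₁ → v ∈ e₂ → e₁ ⊆ e₂ ∨ e₂ ⊆ e₁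

/-- The edge set of the hypergraph `G - N`. -/
def hreduce {V : Type*} [DecidableEq V] (E : Finset (Finset V)) (N : Finset V) :
    Finset (Finset V) :=
  (E.image (fun e => e \ N)).filter (fun e => 2 ≤ e.card)

/-- `gap(G, N) = max { |N| - |e ∩ N| : e ∈ E, e ∩ N ≠ ∅ }`. -/
def hgap {V : Type*} [DecidableEq V] (E : Finset (Finset V)) (N : Finset V) : ℕ :=
  (E.filter (fun e => (e ∩ N).Nonempty)).sup (fun e => N.card - (e ∩ N).card)

/-- `L = N₁, …, N_t` is a nest-set elimination order of the hypergraph with node set `Vs`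
and edge set `E`. -/
def IsElimOrder {V : Type*} [DecidableEq V] (Vs : Finset V) (E : Finset (Finset V))
    (L : List (Finset V)) : Prop :=
  L.Pairwise Disjoint ∧ (∀ N ∈ L, N.Nonempty) ∧ L.foldr (· ∪ ·) ∅ = Vs ∧
  ∀ i : Fin L.length, IsNestSet ((L.take i).foldl hreduce E) (L.get i)

/-- The nest-set width of an elimination order: maximum cardinality of an element. -/
def nswOf {V : Type*} (L : List (Finset V)) : ℕ := (L.map Finset.card).foldr max 0

/-- The nest-set gap of an elimination order: max over `i` of
`gap(G - N₁ - ⋯ - N_{i-1}, N_i)`. -/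
def nsgOf {V : Type*} [DecidableEq V] (E : Finset (Finset V)) (L : List (Finset V)) : ℕ :=
  ((List.range L.length).map
    (fun i => hgap ((L.take i).foldl hreduce E) (L.getD i ∅))).foldr max 0

/-- A β-cycle `v₀, e₀, v₁, e₁, …, v_{ℓ-1}, e_{ℓ-1}, v₀` of length `ℓ = l + 3 ≥ 3` in the
hypergraph with edge set `E`: distinct nodes, distinct edges, and `v i` belongs to
`e (i-1)`, `e i` and to no other `e j` (indices cyclic in `Fin (l + 3)`). -/
def IsBetaCycle {V : Type*} (E : Finset (Finset V)) (l : ℕ)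
    (v : Fin (l + 3) → V) (e : Fin (l + 3) → Finset V) : Prop :=
  Function.Injective v ∧ Function.Injective e ∧ (∀ i, e i ∈ E) ∧
  ∀ i j, v i ∈ e j ↔ (j = i ∨ j + 1 = i)

/-- Let `C` be a β-cycle of length `ℓ = l + 3 ≥ 3` in a hypergraph, and define
`U i := (e (i-1) ∩ e i) \ ⋃_{j ∉ {i-1, i}} e j`. Then for every nest-set `s`, the set
`s ∩ ⋃ j, U j` is either empty, or `s` contains at least `ℓ - 1` of the sets `U j`. -/
theorem stmt_5 {V : Type*} [DecidableEq V] (E : Finset (Finset V)) (l : ℕ)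
    (v : Fin (l + 3) → V) (e : Fin (l + 3) → Finset V)
    (hC : IsBetaCycle E l v e) :
    let U : Fin (l + 3) → Finset V :=
      fun i => (e (i - 1) ∩ e i) \ ((Finset.univ.erase (i - 1)).erase i).sup e
    ∀ s : Finset V, IsNestSet E s →
      s ∩ Finset.univ.sup U = ∅ ∨
      l + 2 ≤ (Finset.univ.filter (fun j : Fin (l + 3) => U j ⊆ s)).card := by
  open Fin.NatCast Fin.CommRing in
  obtain ⟨hv, he, heE, hmem⟩ := hC
  intro U s hs
  by_cases hemp : s ∩ Finset.univ.sup U = ∅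
  · exact Or.inl hemp
  right
  have hUdef : ∀ j, U j =
      (e (j - 1) ∩ e j) \ ((Finset.univ.erase (j - 1)).erase j).sup e := fun j => rfl
  -- basic Fin (l+3) arithmetic facts
  have h1 : (1 : Fin (l+3)) ≠ 0 := by
    intro h
    have h' : ((1:ℕ) : Fin (l+3)) = 0 := by exact_mod_cast h
    rw [CharP.cast_eq_zero_iff (Fin (l+3)) (l+3)] at h'
    exact absurd (Nat.le_of_dvd (by norm_num) h') (by omega)
  have h2 : (2 : Fin (l+3)) ≠ 0 := by
    intro h
    have h' : ((2:ℕ) : Fin (l+3)) = 0 := by exact_mod_cast h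
    rw [CharP.cast_eq_zero_iff (Fin (l+3)) (l+3)] at h'
    exact absurd (Nat.le_of_dvd (by norm_num) h') (by omega)
  have hne_a : ∀ j : Fin (l+3), j + 1 ≠ j := fun j h => h1 (by linear_combination h)
  have hne_b : ∀ j : Fin (l+3), j - 1 ≠ j := fun j h => h1 (by linear_combination -h)
  have hne_c : ∀ j : Fin (l+3), j + 1 ≠ j - 1 := fun j h => h2 (by linear_combination h)
  -- membership description of U
  have hUel : ∀ j y, y ∈ U j →
      y ∈ e (j - 1) ∧ y ∈ e j ∧ ∀ k, k ≠ j - 1 → k ≠ j → y ∉ e k := by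
    intro j y hy
    rw [hUdef, Finset.mem_sdiff, Finset.mem_inter] at hy
    obtain ⟨⟨hy1, hy2⟩, hy3⟩ := hy
    refine ⟨hy1, hy2, fun k hk1 hk2 hyk => hy3 ?_⟩
    exact Finset.mem_sup.mpr ⟨k, Finset.mem_erase.mpr ⟨hk2,
      Finset.mem_erase.mpr ⟨hk1, Finset.mem_univ k⟩⟩, hyk⟩
  -- get the witness x ∈ s ∩ U i
  obtain ⟨x, hx⟩ := Finset.nonempty_iff_ne_empty.mpr hemp
  rw [Finset.mem_inter] at hx
  obtain ⟨hxs, hxU⟩ := hx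
  rw [Finset.mem_sup] at hxU
  obtain ⟨i, -, hxUi⟩ := hxU
  obtain ⟨hxi1, hxi2, -⟩ := hUel i x hxUi
  have hMi : (e i ∩ s).Nonempty := ⟨x, Finset.mem_inter.mpr ⟨hxi2, hxs⟩⟩
  have hMi1 : (e (i - 1) ∩ s).Nonempty := ⟨x, Finset.mem_inter.mpr ⟨hxi1, hxs⟩⟩
  -- a maximal difference edge
  obtain ⟨m, hmT, hmaxcard⟩ := Finset.exists_max_image
    (Finset.univ.filter (fun j : Fin (l+3) => (e j ∩ s).Nonempty))
    (fun j => (e j \ s).card) ⟨i, Finset.mem_filter.mpr ⟨Finset.mem_univ i, hMi⟩⟩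
  have hmNE : (e m ∩ s).Nonempty := (Finset.mem_filter.mp hmT).2
  have hmax : ∀ p, (e p ∩ s).Nonempty → e p \ s ⊆ e m \ s := by
    intro p hp
    rcases hs (e p) (heE p) (e m) (heE m) hp hmNE with h | h
    · exact h
    · have hc : (e p \ s).card ≤ (e m \ s).card :=
        hmaxcard p (Finset.mem_filter.mpr ⟨Finset.mem_univ p, hp⟩)
      rw [Finset.eq_of_subset_of_card_le h hc]
  -- propagation steps
  have hstep_f : ∀ p : Fin (l+3), (e p ∩ s).Nonempty → m ≠ p → m ≠ p + 1 →
      (e (p + 1) ∩ s).Nonempty := by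
    intro p hp hm1 hm2
    by_cases hvs : v (p + 1) ∈ s
    · exact ⟨v (p + 1), Finset.mem_inter.mpr ⟨(hmem (p+1) (p+1)).mpr (Or.inl rfl), hvs⟩⟩
    · exfalso
      have hvp : v (p + 1) ∈ e p \ s :=
        Finset.mem_sdiff.mpr ⟨(hmem (p+1) p).mpr (Or.inr rfl), hvs⟩
      have : v (p + 1) ∈ e m := (Finset.mem_sdiff.mp (hmax p hp hvp)).1
      rcases (hmem (p+1) m).mp this with h | h
      · exact hm2 h
      · exact hm1 (by linear_combination h)
  have hstep_b : ∀ p : Fin (l+3), (e p ∩ s).Nonempty → m ≠ p → m ≠ p - 1 →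
      (e (p - 1) ∩ s).Nonempty := by
    intro p hp hm1 hm2
    by_cases hvs : v p ∈ s
    · exact ⟨v p, Finset.mem_inter.mpr ⟨(hmem p (p-1)).mpr (Or.inr (by ring)), hvs⟩⟩
    · exfalso
      have hvp : v p ∈ e p \ s :=
        Finset.mem_sdiff.mpr ⟨(hmem p p).mpr (Or.inl rfl), hvs⟩
      have : v p ∈ e m := (Finset.mem_sdiff.mp (hmax p hp hvp)).1
      rcases (hmem p m).mp this with h | h
      · exact hm1 h
      · exact hm2 (by linear_combination h)
  -- cast helper
  have hcast_ne : ∀ a b : ℕ, a < l + 3 → b < l + 3 → a ≠ b →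
      ((a : Fin (l+3)) : Fin (l+3)) ≠ (b : Fin (l+3)) := by
    intro a b ha hb hab h
    have := congrArg Fin.val h
    rw [Fin.val_natCast, Fin.val_natCast, Nat.mod_eq_of_lt ha, Nat.mod_eq_of_lt hb] at this
    exact hab this
  -- every edge meets s
  have hM : ∀ j : Fin (l+3), (e j ∩ s).Nonempty := by
    have htm := (m - i).isLt
    have hmeq : m = i + (((m - i).val : ℕ) : Fin (l+3)) := by
      rw [Fin.cast_val_eq_self]; ring
    -- forward chain
    have hF : ∀ t : ℕ, (∀ u : ℕ, u ≤ t → m ≠ i + (u : Fin (l+3))) →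
        (e (i + (t : Fin (l+3))) ∩ s).Nonempty := by
      intro t
      induction t with
      | zero => intro _; simpa using hMi
      | succ t ih =>
        intro hu
        have hprev := ih (fun u hu' => hu u (le_trans hu' (Nat.le_succ t)))
        have heq : (i + ((t+1 : ℕ) : Fin (l+3))) = (i + (t : Fin (l+3))) + 1 := by
          push_cast; ring
        rw [heq]
        exact hstep_f _ hprev (hu t (Nat.le_succ t)) (by rw [← heq]; exact hu (t+1) le_rfl)
    -- backward chain
    have hB : ∀ d : ℕ, d ≤ l + 2 →
        (∀ u : ℕ, u ≤ d → m ≠ i + ((l + 2 - u : ℕ) : Fin (l+3))) →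
        (e (i + ((l + 2 - d : ℕ) : Fin (l+3))) ∩ s).Nonempty := by
      intro d
      induction d with
      | zero =>
        intro _ _
        have : ((l + 2 - 0 : ℕ) : Fin (l+3)) = -1 := by
          have h := CharP.cast_eq_zero (Fin (l+3)) (l+3)
          push_cast at h ⊢
          linear_combination h
        rw [this]
        have : i + (-1 : Fin (l+3)) = i - 1 := by ring
        rw [this]
        exact hMi1
      | succ d ih =>
        intro hd hu
        have hprev := ih (by omega) (fun u hu' => hu u (le_trans hu' (Nat.le_succ d)))
        have hnat : (l + 2 - d : ℕ) = (l + 2 - (d+1)) + 1 := by omega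
        have heq : (i + ((l + 2 - (d+1) : ℕ) : Fin (l+3))) =
            (i + ((l + 2 - d : ℕ) : Fin (l+3))) - 1 := by
          rw [hnat]; push_cast; ring
        rw [heq]
        exact hstep_b _ hprev (hu d (Nat.le_succ d)) (by rw [← heq]; exact hu (d+1) le_rfl)
    intro j
    have htj := (j - i).isLt
    have hjeq : j = i + (((j - i).val : ℕ) : Fin (l+3)) := by
      rw [Fin.cast_val_eq_self]; ring
    rcases lt_trichotomy ((j - i).val) ((m - i).val) with hlt | heq | hgt
    · rw [hjeq]
      refine hF _ (fun u hu h => ?_)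
      rw [hmeq] at h
      exact hcast_ne _ _ (by omega) (by omega) (by omega) (add_left_cancel h).symm
    · have : j - i = m - i := Fin.val_injective heq
      have hjm : j = m := by linear_combination this
      rw [hjm]; exact hmNE
    · have hd : (l + 2 - (l + 2 - (j - i).val) : ℕ) = (j - i).val := by omega
      have := hB (l + 2 - (j - i).val) (by omega) (fun u hu h => by
        rw [hmeq] at h
        exact hcast_ne _ _ (by omega) (by omega) (by omega) (add_left_cancel h).symm)
      rw [hd] at this
      rw [hjeq]
      exact this
  -- the key comparability lemma
  have hL1 : ∀ j k : Fin (l+3), ¬ (U j ⊆ s) → k ≠ j - 1 → k ≠ j →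
      e k \ s ⊆ e (j - 1) \ s := by
    intro j k hj hk1 hk2
    obtain ⟨y, hy, hys⟩ := Finset.not_subset.mp hj
    obtain ⟨hy1, hy2, hy3⟩ := hUel j y hy
    rcases hs (e k) (heE k) (e (j-1)) (heE (j-1)) (hM k) (hM (j-1)) with h | h
    · exact h
    · exfalso
      have : y ∈ e k \ s := h (Finset.mem_sdiff.mpr ⟨hy1, hys⟩)
      exact hy3 k hk1 hk2 (Finset.mem_sdiff.mp this).1
  -- at most one U j is not contained in s
  have hc2 : ∀ j : Fin (l+3), ¬ (U j ⊆ s) → ¬ (U (j+1) ⊆ s) → False := by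
    intro j hj hk
    obtain ⟨z, hz, hzs⟩ := Finset.not_subset.mp hk
    obtain ⟨hz1, hz2, hz3⟩ := hUel (j+1) z hz
    have hsub := hL1 j (j+1) hj (hne_c j) (hne_a j)
    have hmem' : z ∈ e (j - 1) \ s := hsub (Finset.mem_sdiff.mpr ⟨hz2, hzs⟩)
    have hj1 : (j : Fin (l+3)) + 1 - 1 = j := by ring
    refine hz3 (j - 1) ?_ ?_ (Finset.mem_sdiff.mp hmem').1
    · rw [hj1]; exact hne_b j
    · intro h; exact hne_c j h.symm
  have hKey : ∀ j k : Fin (l+3), ¬ (U j ⊆ s) → ¬ (U k ⊆ s) → j ≠ k → False := by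
    intro j k hj hk hjk
    by_cases hc : k = j + 1
    · exact hc2 j hj (hc ▸ hk)
    by_cases hc' : j = k + 1
    · exact hc2 k hk (hc' ▸ hj)
    -- general case
    obtain ⟨y, hy, hys⟩ := Finset.not_subset.mp hj
    obtain ⟨hy1, hy2, hy3⟩ := hUel j y hy
    have hsub := hL1 k j hk (fun h => hc (by linear_combination -h)) hjk
    have hmem' : y ∈ e (k - 1) \ s := hsub (Finset.mem_sdiff.mpr ⟨hy2, hys⟩)
    refine hy3 (k - 1) ?_ ?_ (Finset.mem_sdiff.mp hmem').1
    · intro h; exact hjk (by linear_combination -h)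
    · intro h; exact hc (by linear_combination h)
  -- counting
  have hcard : (Finset.univ.filter (fun j : Fin (l+3) => ¬ (U j ⊆ s))).card ≤ 1 := by
    rw [Finset.card_le_one]
    intro a ha b hb
    by_contra hne
    exact hKey a b (Finset.mem_filter.mp ha).2 (Finset.mem_filter.mp hb).2 hne
  have htot := Finset.card_filter_add_card_filter_not
    (s := (Finset.univ : Finset (Fin (l+3)))) (fun j : Fin (l+3) => U j ⊆ s)
  rw [Finset.card_univ, Fintype.card_fin] at htot
  omega
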